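/- The cyclic weighted inversion number cwinv(π) := n·inv(π) − 2·winv(π) is invariant under right multiplication by the n-cycle c_n = (1,2,…,n): for every π ∈ S_n, cwinv(π·c_n) = cwinv(π). -/

import Mathlib

open Finset

def inversions {n : ℕ} (π : Equiv.Perm (Fin n)) : ℕ :=
  (Finset.univ.filter (fun p : Fin n × Fin n => p.1 < p.2 ∧ π p.2 < π p.1)).card

def winv {n : ℕ} (π : Equiv.Perm (Fin n)) : ℤ :=
  ∑ p ∈ Finset.univ.filter (fun p : Fin n × Fin n => p.1 < p.2 ∧ π p.2 < π p.1),
    ((π p.1 : ℤ) - (π p.2 : ℤ))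

def cwinv {n : ℕ} (π : Equiv.Perm (Fin n)) : ℤ :=
  n * inversions π - 2 * winv π

lemma gaussZ (M : ℕ) : (∑ k ∈ Finset.range M, (k:ℤ)) * 2 = M * (M - 1) := by
  induction M with
  | zero => simp
  | succ M ih => rw [Finset.sum_range_succ, add_mul, ih]; push_cast; ring

lemma helper1 (n M : ℕ) :
    ∑ k ∈ Finset.range M, ((n:ℤ) - 2*((k:ℤ)+1)) = M * ((n:ℤ) - M - 1) := by
  induction M with
  | zero => simp
  | succ M ih => rw [Finset.sum_range_succ, ih]; push_cast; ring

lemma helper2 (n A : ℕ) :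
    ∑ k ∈ Finset.range A, ((n:ℤ) - 2*((A:ℤ)-(k:ℤ))) = A * ((n:ℤ) - A - 1) := by
  have h1 : ∀ k ∈ Finset.range A, ((n:ℤ) - 2*((A:ℤ)-(k:ℤ))) = ((n:ℤ) - 2*A) + 2*k :=
    fun k _ => by ring
  rw [Finset.sum_congr rfl h1, Finset.sum_add_distrib, Finset.sum_const, Finset.card_range,
    ← Finset.mul_sum, nsmul_eq_mul]
  linear_combination gaussZ A

lemma sum_if_eq (n A : ℕ) (hA : A < n) :
    (∑ k ∈ Finset.range n, if A < k then (n:ℤ) - 2*((k:ℤ)-(A:ℤ)) else 0)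
      = ∑ k ∈ Finset.range n, if k < A then (n:ℤ) - 2*((A:ℤ)-(k:ℤ)) else 0 := by
  have hA1 : A + 1 ≤ n := hA
  have hsplitL : (∑ k ∈ Finset.range n, if A < k then (n:ℤ) - 2*((k:ℤ)-(A:ℤ)) else 0)
      = ∑ k ∈ Finset.Ico (A+1) n, ((n:ℤ) - 2*((k:ℤ)-(A:ℤ))) := by
    rw [Finset.range_eq_Ico, ← Finset.sum_Ico_consecutive _ (Nat.zero_le (A+1)) hA1]
    have h0 : ∑ k ∈ Finset.Ico 0 (A+1), (if A < k then (n:ℤ) - 2*((k:ℤ)-(A:ℤ)) else 0) = 0 :=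
      Finset.sum_eq_zero (fun k hk => by
        rw [Finset.mem_Ico] at hk; rw [if_neg (by omega)])
    rw [h0, zero_add]
    exact Finset.sum_congr rfl (fun k hk => by
      rw [Finset.mem_Ico] at hk; rw [if_pos (by omega)])
  have hsplitR : (∑ k ∈ Finset.range n, if k < A then (n:ℤ) - 2*((A:ℤ)-(k:ℤ)) else 0)
      = ∑ k ∈ Finset.Ico 0 A, ((n:ℤ) - 2*((A:ℤ)-(k:ℤ))) := by
    rw [Finset.range_eq_Ico, ← Finset.sum_Ico_consecutive _ (Nat.zero_le A) (le_of_lt hA)]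
    have h0 : ∑ k ∈ Finset.Ico A n, (if k < A then (n:ℤ) - 2*((A:ℤ)-(k:ℤ)) else 0) = 0 :=
      Finset.sum_eq_zero (fun k hk => by
        rw [Finset.mem_Ico] at hk; rw [if_neg (by omega)])
    rw [h0, add_zero]
    exact Finset.sum_congr rfl (fun k hk => by
      rw [Finset.mem_Ico] at hk; rw [if_pos (by omega)])
  rw [hsplitL, hsplitR, ← Finset.range_eq_Ico, helper2, Finset.sum_Ico_eq_sum_range]
  have hcong : ∑ k ∈ Finset.range (n - (A+1)), ((n:ℤ) - 2*(((A+1+k : ℕ):ℤ)-(A:ℤ)))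
      = ∑ k ∈ Finset.range (n - (A+1)), ((n:ℤ) - 2*((k:ℤ)+1)) :=
    Finset.sum_congr rfl (fun k _ => by push_cast; ring)
  rw [hcong, helper1]
  have hM : ((n - (A+1) : ℕ):ℤ) = (n:ℤ) - A - 1 := by omega
  rw [hM]; ring

lemma cwinv_eq {n : ℕ} (σ : Equiv.Perm (Fin n)) :
    cwinv σ = ∑ p : Fin n × Fin n,
      (if p.1 < p.2 ∧ σ p.2 < σ p.1 then ((n:ℤ) - 2*((σ p.1 : ℤ) - (σ p.2 : ℤ))) else 0) := by
  unfold cwinv inversions winv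
  rw [← Finset.sum_filter]
  simp only [Finset.sum_sub_distrib, Finset.sum_const, nsmul_eq_mul, ← Finset.mul_sum]
  ring

theorem cwinv_rotate {n : ℕ} (π : Equiv.Perm (Fin n)) :
    cwinv (π * finRotate n) = cwinv π := by
  cases n with
  | zero =>
    have h : finRotate 0 = 1 := by decide
    rw [h, mul_one]
  | succ m =>
    set c := finRotate (m+1) with hc
    set Φ : Fin (m+1) → ℤ :=
      fun v => if π 0 < v then ((m+1:ℕ):ℤ) - 2*((v:ℤ) - ((π 0 : Fin (m+1)) : ℤ)) else 0 with hΦ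
    set Ψ : Fin (m+1) → ℤ :=
      fun v => if v < π 0 then ((m+1:ℕ):ℤ) - 2*(((π 0 : Fin (m+1)) : ℤ) - (v:ℤ)) else 0 with hΨ
    have hcap : ∀ x : Fin (m+1), c x = x + 1 := finRotate_succ_apply
    have hclast : c (Fin.last m) = 0 := by rw [hcap]; exact Fin.last_add_one m
    have hlt : ∀ x y : Fin (m+1), x ≠ Fin.last m → y ≠ Fin.last m → (c x < c y ↔ x < y) := by
      intro x y hx hy
      have hx' : x < Fin.last m := lt_of_le_of_ne (Fin.le_last x) hx
      have hy' : y < Fin.last m := lt_of_le_of_ne (Fin.le_last y) hy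
      simp only [hcap, Fin.lt_def, Fin.val_add_one_of_lt hx', Fin.val_add_one_of_lt hy']
      omega
    have hcne : ∀ x : Fin (m+1), x ≠ Fin.last m → c x ≠ 0 := by
      intro x hx h
      exact hx (c.injective (h.trans hclast.symm))
    rw [cwinv_eq, cwinv_eq]
    simp only [Equiv.Perm.mul_apply]
    have hre : (∑ p : Fin (m+1) × Fin (m+1),
        (if p.1 < p.2 ∧ π p.2 < π p.1 then (((m+1:ℕ)):ℤ) - 2*((π p.1 : ℤ) - (π p.2 : ℤ)) else 0))
        = ∑ p : Fin (m+1) × Fin (m+1),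
          (if c p.1 < c p.2 ∧ π (c p.2) < π (c p.1) then
            (((m+1:ℕ)):ℤ) - 2*((π (c p.1) : ℤ) - (π (c p.2) : ℤ)) else 0) := by
      refine (Fintype.sum_equiv (Equiv.prodCongr c c) _ _ ?_).symm
      intro p
      rfl
    rw [hre, ← sub_eq_zero, ← Finset.sum_sub_distrib]
    have hptwise : ∀ p : Fin (m+1) × Fin (m+1),
        ((if p.1 < p.2 ∧ π (c p.2) < π (c p.1) then
            (((m+1:ℕ)):ℤ) - 2*((π (c p.1) : ℤ) - (π (c p.2) : ℤ)) else 0)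
          - (if c p.1 < c p.2 ∧ π (c p.2) < π (c p.1) then
            (((m+1:ℕ)):ℤ) - 2*((π (c p.1) : ℤ) - (π (c p.2) : ℤ)) else 0))
        = (if p.2 = Fin.last m then Φ (π (c p.1)) else 0)
          - (if p.1 = Fin.last m then Ψ (π (c p.2)) else 0) := by
      rintro ⟨x, y⟩
      dsimp only
      rcases eq_or_ne x (Fin.last m) with hx | hx
      · rcases eq_or_ne y (Fin.last m) with hy | hy
        · subst hx; subst hy
          simp [hclast, hΦ, hΨ, lt_irrefl]
        · subst hx
          have h1 : ¬ (Fin.last m < y ∧ π (c y) < π (c (Fin.last m))) :=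
            fun h => not_lt.mpr (Fin.le_last y) h.1
          rw [if_neg h1, hclast, if_neg hy, if_pos (rfl : (Fin.last m : Fin (m+1)) = Fin.last m)]
          have h2 : (0 : Fin (m+1)) < c y := Fin.pos_iff_ne_zero.mpr (hcne y hy)
          simp only [hΨ]
          by_cases h3 : π (c y) < π 0
          · rw [if_pos ⟨h2, h3⟩, if_pos h3]
          · rw [if_neg (fun h => h3 h.2), if_neg h3]
      · rcases eq_or_ne y (Fin.last m) with hy | hy
        · subst hy
          rw [hclast]
          have hA' : ¬ (c x < (0 : Fin (m+1)) ∧ π 0 < π (c x)) :=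
            fun h => Fin.not_lt_zero _ h.1
          rw [if_neg hA', if_neg hx, if_pos (rfl : (Fin.last m : Fin (m+1)) = Fin.last m)]
          have h1 : x < Fin.last m := lt_of_le_of_ne (Fin.le_last x) hx
          simp only [hΦ]
          by_cases h3 : π 0 < π (c x)
          · rw [if_pos ⟨h1, h3⟩, if_pos h3]
          · rw [if_neg (fun h => h3 h.2), if_neg h3]
        · rw [if_neg hx, if_neg hy]
          have hiff := hlt x y hx hy
          by_cases hC : c x < c y ∧ π (c y) < π (c x)
          · rw [if_pos hC, if_pos (⟨hiff.mp hC.1, hC.2⟩ : x < y ∧ π (c y) < π (c x)),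
              sub_self, sub_self]
          · rw [if_neg hC, if_neg (fun q : x < y ∧ π (c y) < π (c x) =>
              hC ⟨hiff.mpr q.1, q.2⟩)]
    refine Eq.trans (Finset.sum_congr rfl (fun p _ => hptwise p)) ?_
    rw [Finset.sum_sub_distrib]
    have hA : (∑ p : Fin (m+1) × Fin (m+1), if p.2 = Fin.last m then Φ (π (c p.1)) else 0)
        = ∑ v : Fin (m+1), Φ v := by
      rw [Fintype.sum_prod_type]
      simp only [Finset.sum_ite_eq' Finset.univ (Fin.last m), Finset.mem_univ, if_true]
      calc ∑ x : Fin (m+1), Φ (π (c x)) = ∑ x : Fin (m+1), Φ ((c.trans π) x) := by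
            simp [Equiv.trans_apply]
        _ = ∑ v : Fin (m+1), Φ v := Equiv.sum_comp (c.trans π) Φ
    have hB : (∑ p : Fin (m+1) × Fin (m+1), if p.1 = Fin.last m then Ψ (π (c p.2)) else 0)
        = ∑ v : Fin (m+1), Ψ v := by
      rw [Fintype.sum_prod_type_right]
      simp only [Finset.sum_ite_eq' Finset.univ (Fin.last m), Finset.mem_univ, if_true]
      calc ∑ y : Fin (m+1), Ψ (π (c y)) = ∑ y : Fin (m+1), Ψ ((c.trans π) y) := by
            simp [Equiv.trans_apply]
        _ = ∑ v : Fin (m+1), Ψ v := Equiv.sum_comp (c.trans π) Ψ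
    rw [hA, hB, sub_eq_zero]
    have hlt0 : ((π 0 : Fin (m+1)) : ℕ) < m + 1 := (π 0).is_lt
    have e1 : ∑ v : Fin (m+1), Φ v
        = ∑ k ∈ Finset.range (m+1), (if ((π 0 : Fin (m+1)) : ℕ) < k then
            ((m+1:ℕ):ℤ) - 2*((k:ℤ)-(((π 0 : Fin (m+1)) : ℕ):ℤ)) else 0) := by
      rw [← Fin.sum_univ_eq_sum_range]
      exact Finset.sum_congr rfl (fun v _ => by simp only [hΦ, Fin.lt_def])
    have e2 : ∑ v : Fin (m+1), Ψ v
        = ∑ k ∈ Finset.range (m+1), (if k < ((π 0 : Fin (m+1)) : ℕ) then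
            ((m+1:ℕ):ℤ) - 2*((((π 0 : Fin (m+1)) : ℕ):ℤ)-(k:ℤ)) else 0) := by
      rw [← Fin.sum_univ_eq_sum_range]
      exact Finset.sum_congr rfl (fun v _ => by simp only [hΨ, Fin.lt_def])
    rw [e1, e2]
    exact sum_if_eq (m+1) _ hlt0
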